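/- Let H be a finite-dimensional Hopf algebra with right integral λ. Then for all x, y ∈ H: λ(S(y_{(1)}) x y_{(2)}) = λ(x)·ε(y). -/

import Mathlib

open TensorProduct

/-- Convolution product on the dual of a Hopf algebra: `(f * g)(x) = f(x₍₁₎) g(x₍₂₎)`. -/
noncomputable def conv {k H : Type} [Field k] [Ring H] [HopfAlgebra k H]
    (f g : H →ₗ[k] k) : H →ₗ[k] k :=
  (LinearMap.mul' k k) ∘ₗ (TensorProduct.map f g) ∘ₗ (Coalgebra.comul (R := k) (A := H))

section ConvAux

open Coalgebra

variable {k : Type} [Field k] {B C : Type} [Semiring B] [Algebra k B]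
  [AddCommMonoid C] [Module k C] [Coalgebra k C]

/-- Convolution product on `Hom(C, B)` for a coalgebra `C` and algebra `B`. -/
noncomputable def cvv (f g : C →ₗ[k] B) : C →ₗ[k] B :=
  LinearMap.mul' k B ∘ₗ TensorProduct.map f g ∘ₗ Coalgebra.comul

/-- Convolution unit. -/
noncomputable def cuu : C →ₗ[k] B := Algebra.linearMap k B ∘ₗ Coalgebra.counit

lemma cvv_apply (f g : C →ₗ[k] B) (c : C) :
    cvv f g c = LinearMap.mul' k B (TensorProduct.map f g (Coalgebra.comul (R := k) c)) := rfl

lemma cvv_repr (f g : C →ₗ[k] B) {c : C} {ι : Type*} (repr : Coalgebra.Repr k c ι) :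
    cvv f g c = ∑ i ∈ repr.index, f (repr.left i) * g (repr.right i) := by
  simp only [cvv, LinearMap.comp_apply, ← repr.eq, map_sum, TensorProduct.map_tmul,
    LinearMap.mul'_apply]

lemma cuu_apply (c : C) :
    (cuu (k := k) (B := B)) c = algebraMap k B (Coalgebra.counit (R := k) c) := rfl

lemma cvv_cuu_left (f : C →ₗ[k] B) : cvv cuu f = f := by
  ext c
  have h := Coalgebra.sum_counit_tmul_map_eq (R := k) f c (repr := Coalgebra.Repr.arbitrary k c)
  apply_fun (TensorProduct.lid k B) at h
  simp only [map_sum, TensorProduct.lid_tmul, one_smul, LinearEquiv.coe_coe] at h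
  rw [cvv_repr cuu f (Coalgebra.Repr.arbitrary k c)]
  simp only [cuu_apply, ← Algebra.smul_def]
  exact h

lemma cvv_cuu_right (f : C →ₗ[k] B) : cvv f cuu = f := by
  ext c
  have h := Coalgebra.sum_map_tmul_counit_eq (R := k) f c (repr := Coalgebra.Repr.arbitrary k c)
  apply_fun (TensorProduct.rid k B) at h
  simp only [map_sum, TensorProduct.rid_tmul, one_smul, LinearEquiv.coe_coe] at h
  rw [cvv_repr f cuu (Coalgebra.Repr.arbitrary k c)]
  simp only [cuu_apply, ← Algebra.commutes, ← Algebra.smul_def]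
  exact h

lemma cvv_assoc (f g h : C →ₗ[k] B) : cvv (cvv f g) h = cvv f (cvv g h) := by
  ext c
  set repr := Coalgebra.Repr.arbitrary k c with hrepr
  set a₁ : ∀ i : C × C, Coalgebra.Repr k (repr.left i) (C × C) :=
    fun i => Coalgebra.Repr.arbitrary k (repr.left i) with ha₁
  set a₂ : ∀ i : C × C, Coalgebra.Repr k (repr.right i) (C × C) :=
    fun i => Coalgebra.Repr.arbitrary k (repr.right i) with ha₂
  have key := Coalgebra.sum_map_tmul_tmul_eq (R := k) f g h c (repr := repr) (a₁ := a₁) (a₂ := a₂)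
  apply_fun (LinearMap.mul' k B ∘ₗ LinearMap.lTensor B (LinearMap.mul' k B)) at key
  simp only [map_sum, LinearMap.comp_apply, LinearMap.lTensor_tmul,
    LinearMap.mul'_apply] at key
  rw [cvv_repr (cvv f g) h repr, cvv_repr f (cvv g h) repr]
  have hl : ∀ i, cvv f g (repr.left i) =
      ∑ j ∈ (a₁ i).index, f ((a₁ i).left j) * g ((a₁ i).right j) :=
    fun i => cvv_repr f g (a₁ i)
  have hr : ∀ i, cvv g h (repr.right i) =
      ∑ j ∈ (a₂ i).index, g ((a₂ i).left j) * h ((a₂ i).right j) :=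
    fun i => cvv_repr g h (a₂ i)
  simp only [hl, hr, Finset.sum_mul, Finset.mul_sum, mul_assoc]
  exact key.symm

lemma cvv_inv_unique {m F G : C →ₗ[k] B} (h1 : cvv F m = cuu) (h2 : cvv m G = cuu) : F = G := by
  have h := cvv_assoc F m G
  rw [h1, h2, cvv_cuu_left, cvv_cuu_right] at h
  exact h.symm

end ConvAux

section HopfAux

open Coalgebra

variable {k H : Type} [Field k] [Ring H] [HopfAlgebra k H]

local notation "𝒮" => (HopfAlgebra.antipode (R := k) (A := H))

lemma comul_tensor_tmul (a b : H) :
    Coalgebra.comul (R := k) (A := H ⊗[k] H) (a ⊗ₜ[k] b) =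
      TensorProduct.tensorTensorTensorComm k H H H H
        (Coalgebra.comul (R := k) a ⊗ₜ Coalgebra.comul (R := k) b) := rfl

lemma counit_tensor_tmul (a b : H) :
    Coalgebra.counit (R := k) (A := H ⊗[k] H) (a ⊗ₜ[k] b) =
      Coalgebra.counit (R := k) a * Coalgebra.counit (R := k) b :=
  (TensorProduct.counit_tmul (R := k) (S := k) a b).trans (mul_comm _ _)

lemma mulmul_comul (a b : H) :
    TensorProduct.map (LinearMap.mul' k H) (LinearMap.mul' k H)
        (Coalgebra.comul (R := k) (A := H ⊗[k] H) (a ⊗ₜ[k] b)) =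
      Coalgebra.comul (R := k) (a * b) := by
  have ra := Coalgebra.Repr.arbitrary k a
  have rb := Coalgebra.Repr.arbitrary k b
  rw [comul_tensor_tmul, Bialgebra.comul_mul, ← ra.eq, ← rb.eq]
  rw [TensorProduct.sum_tmul]
  simp only [TensorProduct.tmul_sum, map_sum,
    TensorProduct.tensorTensorTensorComm_tmul, TensorProduct.map_tmul, LinearMap.mul'_apply]
  rw [Finset.sum_mul_sum]
  simp only [Algebra.TensorProduct.tmul_mul_tmul]

lemma antipode_alpha :
    cvv (𝒮 ∘ₗ LinearMap.mul' k H) (LinearMap.mul' k H) =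
      (cuu : H ⊗[k] H →ₗ[k] H) := by
  apply TensorProduct.ext'
  intro a b
  rw [cvv_apply]
  have hmaps : TensorProduct.map (𝒮 ∘ₗ LinearMap.mul' k H) (LinearMap.mul' k H) =
      TensorProduct.map 𝒮 LinearMap.id ∘ₗ
        TensorProduct.map (LinearMap.mul' k H) (LinearMap.mul' k H) := by
    rw [← TensorProduct.map_comp, LinearMap.id_comp]
  rw [hmaps, LinearMap.comp_apply, mulmul_comul]
  have := HopfAlgebra.mul_antipode_rTensor_comul_apply (R := k) (a * b)
  rw [show (HopfAlgebra.antipode (R := k)).rTensor H = TensorProduct.map 𝒮 LinearMap.id from rfl]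
    at this
  rw [this, cuu_apply, counit_tensor_tmul, Bialgebra.counit_mul]

lemma antipode_beta :
    cvv (LinearMap.mul' k H)
        (LinearMap.mul' k H ∘ₗ TensorProduct.map 𝒮 𝒮 ∘ₗ
          (TensorProduct.comm k H H).toLinearMap) =
      (cuu : H ⊗[k] H →ₗ[k] H) := by
  apply TensorProduct.ext'
  intro a b
  have ra := Coalgebra.Repr.arbitrary k a
  have rb := Coalgebra.Repr.arbitrary k b
  have hc : Coalgebra.comul (R := k) (A := H ⊗[k] H) (a ⊗ₜ[k] b) =
      ∑ i ∈ ra.index, ∑ j ∈ rb.index,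
        (ra.left i ⊗ₜ[k] rb.left j) ⊗ₜ[k] (ra.right i ⊗ₜ[k] rb.right j) := by
    rw [comul_tensor_tmul, ← ra.eq, ← rb.eq, TensorProduct.sum_tmul]
    simp only [TensorProduct.tmul_sum, map_sum, TensorProduct.tensorTensorTensorComm_tmul]
  rw [cvv_apply, hc]
  simp only [map_sum, TensorProduct.map_tmul, LinearMap.mul'_apply, LinearMap.comp_apply,
    LinearEquiv.coe_coe, TensorProduct.comm_tmul]
  have hbsum := HopfAlgebra.sum_mul_antipode_eq_smul (R := k) rb
  have hasum := HopfAlgebra.sum_mul_antipode_eq_smul (R := k) ra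
  calc ∑ i ∈ ra.index, ∑ j ∈ rb.index,
        ra.left i * rb.left j * (𝒮 (rb.right j) * 𝒮 (ra.right i))
      = ∑ i ∈ ra.index, ra.left i *
          ((∑ j ∈ rb.index, rb.left j * 𝒮 (rb.right j)) * 𝒮 (ra.right i)) := by
        refine Finset.sum_congr rfl fun i _ => ?_
        rw [Finset.sum_mul, Finset.mul_sum]
        refine Finset.sum_congr rfl fun j _ => ?_
        rw [mul_assoc, ← mul_assoc (rb.left j)]
    _ = ∑ i ∈ ra.index, ra.left i *
          ((Coalgebra.counit (R := k) b • (1 : H)) * 𝒮 (ra.right i)) := by rw [hbsum]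
    _ = Coalgebra.counit (R := k) b • ∑ i ∈ ra.index, ra.left i * 𝒮 (ra.right i) := by
        rw [Finset.smul_sum]
        refine Finset.sum_congr rfl fun i _ => ?_
        rw [smul_mul_assoc, one_mul, mul_smul_comm]
    _ = Coalgebra.counit (R := k) b • (Coalgebra.counit (R := k) a • (1 : H)) := by rw [hasum]
    _ = cuu ((a : H) ⊗ₜ[k] b) := by
        rw [cuu_apply, counit_tensor_tmul, smul_smul, Algebra.smul_def, mul_one, mul_comm]

lemma antipode_mul_rev (a b : H) : 𝒮 (a * b) = 𝒮 b * 𝒮 a := by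
  have h := cvv_inv_unique (k := k) (B := H) (C := H ⊗[k] H) antipode_alpha antipode_beta
  have h2 := LinearMap.congr_fun h (a ⊗ₜ[k] b)
  simpa using h2

lemma antipode_one' : 𝒮 (1 : H) = 1 := by
  have h := HopfAlgebra.mul_antipode_rTensor_comul_apply (R := k) (1 : H)
  rw [Bialgebra.comul_one, Algebra.TensorProduct.one_def] at h
  simpa using h

lemma key_sum (y : H) {ι : Type*} (r : Coalgebra.Repr k y ι) :
    ∑ i ∈ r.index, 𝒮 (𝒮 (r.right i)) * 𝒮 (r.left i) =
      Coalgebra.counit (R := k) y • (1 : H) := by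
  calc ∑ i ∈ r.index, 𝒮 (𝒮 (r.right i)) * 𝒮 (r.left i)
      = ∑ i ∈ r.index, 𝒮 (r.left i * 𝒮 (r.right i)) := by
        refine Finset.sum_congr rfl fun i _ => (antipode_mul_rev _ _).symm
    _ = 𝒮 (∑ i ∈ r.index, r.left i * 𝒮 (r.right i)) := (map_sum _ _ _).symm
    _ = 𝒮 (Coalgebra.counit (R := k) y • (1 : H)) := by
        rw [HopfAlgebra.sum_mul_antipode_eq_smul r]
    _ = Coalgebra.counit (R := k) y • (1 : H) := by rw [map_smul, antipode_one']

end HopfAux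

/-- Let `H` be a finite-dimensional (unimodular) Hopf algebra with right integral `λ`
satisfying the quantum character property. Then for all `x, y ∈ H`:
`λ(S(y₍₁₎) x y₍₂₎) = λ(x) ε(y)`. The left-hand side is expressed as `λ` applied to
`mul' ∘ ((·x) ∘ S ⊗ id) ∘ Δ` evaluated at `y`. -/
theorem stmt6 {k H : Type} [Field k] [Ring H] [HopfAlgebra k H] [FiniteDimensional k H]
    (lam : H →ₗ[k] k)
    (hri : ∀ f : H →ₗ[k] k, conv f lam = f 1 • lam)
    (hqc : ∀ a b : H, lam (a * b) =
      lam (HopfAlgebra.antipode (R := k) (HopfAlgebra.antipode (R := k) b) * a)) :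
    ∀ x y : H,
      lam ((LinearMap.mul' k H)
        ((TensorProduct.map
            ((LinearMap.mulRight k x) ∘ₗ HopfAlgebra.antipode (R := k))
            LinearMap.id)
          (Coalgebra.comul (R := k) y)))
        = lam x * Coalgebra.counit (R := k) y := by
  intro x y
  have r := Coalgebra.Repr.arbitrary k y
  rw [← r.eq]
  simp only [map_sum, TensorProduct.map_tmul, LinearMap.comp_apply,
    LinearMap.mulRight_apply, LinearMap.id_coe, id_eq, LinearMap.mul'_apply]
  have step : ∀ i, lam (HopfAlgebra.antipode (R := k) (r.left i) * x * r.right i) =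
      lam ((HopfAlgebra.antipode (R := k) (HopfAlgebra.antipode (R := k) (r.right i)) *
        HopfAlgebra.antipode (R := k) (r.left i)) * x) := by
    intro i
    rw [hqc (HopfAlgebra.antipode (R := k) (r.left i) * x) (r.right i), mul_assoc]
  calc ∑ i ∈ r.index, lam (HopfAlgebra.antipode (R := k) (r.left i) * x * r.right i)
      = ∑ i ∈ r.index,
          lam ((HopfAlgebra.antipode (R := k) (HopfAlgebra.antipode (R := k) (r.right i)) *
            HopfAlgebra.antipode (R := k) (r.left i)) * x) :=
        Finset.sum_congr rfl fun i _ => step i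
    _ = lam ((∑ i ∈ r.index,
          HopfAlgebra.antipode (R := k) (HopfAlgebra.antipode (R := k) (r.right i)) *
            HopfAlgebra.antipode (R := k) (r.left i)) * x) := by
        rw [Finset.sum_mul, map_sum]
    _ = lam ((Coalgebra.counit (R := k) y • (1 : H)) * x) := by rw [key_sum y r]
    _ = lam x * Coalgebra.counit (R := k) y := by
        rw [smul_mul_assoc, one_mul, map_smul, smul_eq_mul, mul_comm]
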